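/- arXiv:1911.07168 — 3 statements merged into one kernel-verified Lean document; each statement's English description precedes it below -/
import Mathlib

section
/- Let m, k, g, ℓ₀ > 0 and let θ, ℓ : ℝ → ℝ be twice differentiable with ℓ(t) > 0. Suppose the stance dynamics hold: m ℓ̈ = m ℓ θ̇² - k(ℓ - ℓ₀) - m g sin θ + k u₁ and m ℓ² θ̈ = -m g ℓ cos θ - 2 m ℓ ℓ̇ θ̇ + u₂. Define y₁ = ℓ cos θ, y₂ = ℓ sin θ. Then ÿ₁ = (k/m) cos(θ)(ℓ₀ - ℓ + u₁) - (sin θ)/(m ℓ) · u₂ and ÿ₂ = (k/m) sin(θ)(ℓ₀ - ℓ + u₁) + (cos θ)/(m ℓ) · u₂ - g. -/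
theorem stmt2 (m k g ℓ₀ : ℝ) (hm : 0 < m) (hk : 0 < k) (hg : 0 < g) (hℓ₀ : 0 < ℓ₀)
    (θ ℓ θ' θ'' ℓ' ℓ'' u₁ u₂ : ℝ → ℝ)
    (hθ : ∀ t, HasDerivAt θ (θ' t) t) (hθ' : ∀ t, HasDerivAt θ' (θ'' t) t)
    (hℓ : ∀ t, HasDerivAt ℓ (ℓ' t) t) (hℓ' : ∀ t, HasDerivAt ℓ' (ℓ'' t) t)
    (hpos : ∀ t, 0 < ℓ t)
    (hdyn1 : ∀ t, m * ℓ'' t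
      = m * ℓ t * (θ' t) ^ 2 - k * (ℓ t - ℓ₀) - m * g * Real.sin (θ t) + k * u₁ t)
    (hdyn2 : ∀ t, m * (ℓ t) ^ 2 * θ'' t
      = -(m * g * ℓ t * Real.cos (θ t)) - 2 * m * ℓ t * ℓ' t * θ' t + u₂ t) :
    ∀ t : ℝ,
      HasDerivAt (fun s => ℓ s * Real.cos (θ s))
        (-Real.sin (θ t) * θ' t * ℓ t + Real.cos (θ t) * ℓ' t) t ∧
      HasDerivAt (fun s => -Real.sin (θ s) * θ' s * ℓ s + Real.cos (θ s) * ℓ' s)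
        (k / m * Real.cos (θ t) * (ℓ₀ - ℓ t + u₁ t) - Real.sin (θ t) / (m * ℓ t) * u₂ t) t ∧
      HasDerivAt (fun s => ℓ s * Real.sin (θ s))
        (Real.cos (θ t) * θ' t * ℓ t + Real.sin (θ t) * ℓ' t) t ∧
      HasDerivAt (fun s => Real.cos (θ s) * θ' s * ℓ s + Real.sin (θ s) * ℓ' s)
        (k / m * Real.sin (θ t) * (ℓ₀ - ℓ t + u₁ t) + Real.cos (θ t) / (m * ℓ t) * u₂ t - g) t := by
  intro t
  have hc : ∀ s, HasDerivAt (fun s => Real.cos (θ s)) (-Real.sin (θ s) * θ' s) s :=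
    fun s => (Real.hasDerivAt_cos (θ s)).comp s (hθ s)
  have hs : ∀ s, HasDerivAt (fun s => Real.sin (θ s)) (Real.cos (θ s) * θ' s) s :=
    fun s => (Real.hasDerivAt_sin (θ s)).comp s (hθ s)
  have hms : ∀ s, HasDerivAt (fun s => -Real.sin (θ s)) (-(Real.cos (θ s) * θ' s)) s :=
    fun s => (hs s).neg
  have h1 := hdyn1 t
  have h2 := hdyn2 t
  have hm' : m ≠ 0 := hm.ne'
  have hl' : ℓ t ≠ 0 := (hpos t).ne'
  refine ⟨?_, ?_, ?_, ?_⟩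
  · have := (hℓ t).mul (hc t)
    refine this.congr_deriv ?_; ring
  · have := (((hms t).mul (hθ' t)).mul (hℓ t)).add ((hc t).mul (hℓ' t))
    refine this.congr_deriv (Eq.symm ?_)
    simp only [Pi.mul_apply]
    field_simp
    linear_combination (Real.sin (θ t) * h2 - Real.cos (θ t) * ℓ t * h1)
  · have := (hℓ t).mul (hs t)
    refine this.congr_deriv ?_; ring
  · have := (((hc t).mul (hθ' t)).mul (hℓ t)).add ((hs t).mul (hℓ' t))
    refine this.congr_deriv (Eq.symm ?_)
    simp only [Pi.mul_apply]
    have hpyth := Real.sin_sq_add_cos_sq (θ t)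
    field_simp
    linear_combination -((Real.sin (θ t) * ℓ t * h1 + Real.cos (θ t) * h2))
      + m * g * ℓ t * hpyth
end

section
/- Under the hypotheses of the previous flat-output derivative computation, the inputs are recovered from the flat outputs by u₁ = √(y₁² + y₂²) + (m y₁ ÿ₁ + m y₂ ÿ₂ + m g y₂)/(k √(y₁² + y₂²)) - ℓ₀ and u₂ = m g y₁ + m y₁ ÿ₂ - m y₂ ÿ₁. -/
theorem stmt3 (m k g ℓ₀ ℓ θ u₁ u₂ y₁ y₂ ddy₁ ddy₂ : ℝ)
    (hm : 0 < m) (hk : 0 < k) (hg : 0 < g) (hℓ₀ : 0 < ℓ₀) (hℓ : 0 < ℓ)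
    (hy1 : y₁ = ℓ * Real.cos θ) (hy2 : y₂ = ℓ * Real.sin θ)
    (hd1 : ddy₁ = k / m * Real.cos θ * (ℓ₀ - ℓ + u₁) - Real.sin θ / (m * ℓ) * u₂)
    (hd2 : ddy₂ = k / m * Real.sin θ * (ℓ₀ - ℓ + u₁) + Real.cos θ / (m * ℓ) * u₂ - g) :
    u₁ = Real.sqrt (y₁ ^ 2 + y₂ ^ 2)
        + (m * y₁ * ddy₁ + m * y₂ * ddy₂ + m * g * y₂) / (k * Real.sqrt (y₁ ^ 2 + y₂ ^ 2)) - ℓ₀ ∧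
    u₂ = m * g * y₁ + m * y₁ * ddy₂ - m * y₂ * ddy₁ := by
  have hpyt := Real.sin_sq_add_cos_sq θ
  have hs : Real.sqrt (y₁ ^ 2 + y₂ ^ 2) = ℓ := by
    rw [hy1, hy2]
    have : (ℓ * Real.cos θ) ^ 2 + (ℓ * Real.sin θ) ^ 2 = ℓ ^ 2 := by ring_nf; nlinarith
    rw [this, Real.sqrt_sq hℓ.le]
  subst hy1 hy2 hd1 hd2
  rw [hs]
  constructor
  · field_simp
    linear_combination (-(ℓ * k * (ℓ₀ - ℓ + u₁))) * hpyt
  · field_simp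
    linear_combination (-u₂) * hpyt
end

section
/- Given the extended SLIP stance dynamics, for any twice continuously differentiable curves y₁, y₂ : [0,T] → ℝ with y₁(t)² + y₂(t)² > 0 and y₂(t) > 0 for all t, defining θ(t) = arccot(y₁(t)/y₂(t)) (valued in (0,π)), ℓ(t) = √(y₁(t)² + y₂(t)²), u₁ and u₂ by the flatness inversion formulas, the resulting curves (θ, ℓ) satisfy the stance equations of motion m ℓ̈ = m ℓ θ̇² - k(ℓ - ℓ₀) - m g sin θ + k u₁ and m ℓ² θ̈ = -m g ℓ cos θ - 2 m ℓ ℓ̇ θ̇ + u₂. -/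
open Real

noncomputable def arccot (x : ℝ) : ℝ := π / 2 - Real.arctan x

theorem stmt15 (m k g ℓ₀ : ℝ) (hm : 0 < m) (hk : 0 < k) (hg : 0 < g) (hℓ₀ : 0 < ℓ₀)
    (y₁ y₂ dy₁ dy₂ ddy₁ ddy₂ : ℝ → ℝ)
    (hy₁ : ∀ t, HasDerivAt y₁ (dy₁ t) t) (hdy₁ : ∀ t, HasDerivAt dy₁ (ddy₁ t) t)
    (hy₂ : ∀ t, HasDerivAt y₂ (dy₂ t) t) (hdy₂ : ∀ t, HasDerivAt dy₂ (ddy₂ t) t)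
    (hpos : ∀ t, 0 < (y₁ t) ^ 2 + (y₂ t) ^ 2) (hy₂pos : ∀ t, 0 < y₂ t) :
    let θ : ℝ → ℝ := fun t => arccot (y₁ t / y₂ t)
    let ℓ : ℝ → ℝ := fun t => Real.sqrt ((y₁ t) ^ 2 + (y₂ t) ^ 2)
    let u₁ : ℝ → ℝ := fun t => Real.sqrt ((y₁ t) ^ 2 + (y₂ t) ^ 2)
        + (m * y₁ t * ddy₁ t + m * y₂ t * ddy₂ t + m * g * y₂ t)
          / (k * Real.sqrt ((y₁ t) ^ 2 + (y₂ t) ^ 2)) - ℓ₀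
    let u₂ : ℝ → ℝ := fun t => m * g * y₁ t + m * y₁ t * ddy₂ t - m * y₂ t * ddy₁ t
    ∀ t : ℝ,
      m * deriv (deriv ℓ) t
        = m * ℓ t * (deriv θ t) ^ 2 - k * (ℓ t - ℓ₀) - m * g * Real.sin (θ t) + k * u₁ t ∧
      m * (ℓ t) ^ 2 * deriv (deriv θ) t
        = -(m * g * ℓ t * Real.cos (θ t)) - 2 * m * ℓ t * deriv ℓ t * deriv θ t + u₂ t := by
  intro θ ℓ u₁ u₂
  have hSpos : ∀ t, 0 < (y₁ t)^2 + (y₂ t)^2 := hpos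
  have hLpos : ∀ t, 0 < Real.sqrt ((y₁ t)^2 + (y₂ t)^2) :=
    fun t => Real.sqrt_pos.2 (hSpos t)
  have hL2 : ∀ t, (Real.sqrt ((y₁ t)^2 + (y₂ t)^2))^2 = (y₁ t)^2 + (y₂ t)^2 :=
    fun t => Real.sq_sqrt (hSpos t).le
  -- first derivatives of building blocks
  have hN : ∀ t, HasDerivAt (fun t => y₁ t * dy₁ t + y₂ t * dy₂ t)
      (dy₁ t^2 + y₁ t * ddy₁ t + dy₂ t^2 + y₂ t * ddy₂ t) t := by
    intro t
    have := ((hy₁ t).mul (hdy₁ t)).add ((hy₂ t).mul (hdy₂ t))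
    exact this.congr_deriv (by ring)
  have hS : ∀ t, HasDerivAt (fun t => (y₁ t)^2 + (y₂ t)^2)
      (2 * (y₁ t * dy₁ t + y₂ t * dy₂ t)) t := by
    intro t
    have := ((hy₁ t).pow 2).add ((hy₂ t).pow 2)
    exact this.congr_deriv (by ring)
  have hL : ∀ t, HasDerivAt ℓ
      ((y₁ t * dy₁ t + y₂ t * dy₂ t) / Real.sqrt ((y₁ t)^2 + (y₂ t)^2)) t := by
    intro t
    have := (hS t).sqrt (hSpos t).ne'
    convert this using 1
    rw [eq_comm, mul_div_mul_left _ _ (two_ne_zero)]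
  have hM : ∀ t, HasDerivAt (fun t => y₁ t * dy₂ t - y₂ t * dy₁ t)
      (y₁ t * ddy₂ t - y₂ t * ddy₁ t) t := by
    intro t
    have := ((hy₁ t).mul (hdy₂ t)).sub ((hy₂ t).mul (hdy₁ t))
    exact this.congr_deriv (by ring)
  have hθ : ∀ t, HasDerivAt θ
      ((y₁ t * dy₂ t - y₂ t * dy₁ t) / ((y₁ t)^2 + (y₂ t)^2)) t := by
    intro t
    have hq := (hy₁ t).div (hy₂ t) (hy₂pos t).ne'
    have := (hasDerivAt_const t (π/2)).sub hq.arctan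
    refine this.congr_deriv ?_
    have h2 : y₂ t ≠ 0 := (hy₂pos t).ne'
    have hSne : (y₁ t)^2 + (y₂ t)^2 ≠ 0 := (hSpos t).ne'
    simp only [Pi.div_apply]
    field_simp
    ring
  -- deriv functions as explicit formulas
  have hdL : deriv ℓ = fun t => (y₁ t * dy₁ t + y₂ t * dy₂ t) / Real.sqrt ((y₁ t)^2 + (y₂ t)^2) :=
    funext fun t => (hL t).deriv
  have hdθ : deriv θ = fun t => (y₁ t * dy₂ t - y₂ t * dy₁ t) / ((y₁ t)^2 + (y₂ t)^2) :=
    funext fun t => (hθ t).deriv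
  -- second derivatives
  have hddL : ∀ t, deriv (deriv ℓ) t =
      ((dy₁ t^2 + y₁ t * ddy₁ t + dy₂ t^2 + y₂ t * ddy₂ t) * Real.sqrt ((y₁ t)^2 + (y₂ t)^2)
        - (y₁ t * dy₁ t + y₂ t * dy₂ t) *
          ((y₁ t * dy₁ t + y₂ t * dy₂ t) / Real.sqrt ((y₁ t)^2 + (y₂ t)^2)))
        / ((y₁ t)^2 + (y₂ t)^2) := by
    intro t
    rw [hdL]
    have h := (hN t).div (hL t) (hLpos t).ne'
    exact h.deriv.trans (by simp only [ℓ, hL2])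
  have hddθ : ∀ t, deriv (deriv θ) t =
      ((y₁ t * ddy₂ t - y₂ t * ddy₁ t) * ((y₁ t)^2 + (y₂ t)^2)
        - (y₁ t * dy₂ t - y₂ t * dy₁ t) * (2 * (y₁ t * dy₁ t + y₂ t * dy₂ t)))
        / ((y₁ t)^2 + (y₂ t)^2)^2 := by
    intro t
    rw [hdθ]
    exact ((hM t).div (hS t) (hSpos t).ne').deriv
  -- sin and cos of θ
  have hsqrt1q : ∀ t, Real.sqrt (1 + (y₁ t / y₂ t)^2)
      = Real.sqrt ((y₁ t)^2 + (y₂ t)^2) / y₂ t := by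
    intro t
    have h2 : (0:ℝ) < y₂ t := hy₂pos t
    have : 1 + (y₁ t / y₂ t)^2 = ((y₁ t)^2 + (y₂ t)^2) / (y₂ t)^2 := by
      field_simp; ring
    rw [this, Real.sqrt_div (hSpos t).le, Real.sqrt_sq h2.le]
  have hsin : ∀ t, Real.sin (θ t) = y₂ t / Real.sqrt ((y₁ t)^2 + (y₂ t)^2) := by
    intro t
    show Real.sin (π/2 - Real.arctan (y₁ t / y₂ t)) = _
    rw [Real.sin_pi_div_two_sub, Real.cos_arctan, hsqrt1q]
    rw [one_div_div]
  have hcos : ∀ t, Real.cos (θ t) = y₁ t / Real.sqrt ((y₁ t)^2 + (y₂ t)^2) := by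
    intro t
    show Real.cos (π/2 - Real.arctan (y₁ t / y₂ t)) = _
    rw [Real.cos_pi_div_two_sub, Real.sin_arctan, hsqrt1q]
    have h2 : y₂ t ≠ 0 := (hy₂pos t).ne'
    have hLne : Real.sqrt ((y₁ t)^2 + (y₂ t)^2) ≠ 0 := (hLpos t).ne'
    field_simp
  -- main computation
  intro t
  have hLne : Real.sqrt ((y₁ t)^2 + (y₂ t)^2) ≠ 0 := (hLpos t).ne'
  have hSne : (y₁ t)^2 + (y₂ t)^2 ≠ 0 := (hSpos t).ne'
  have hkne : k ≠ 0 := hk.ne'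
  constructor
  · rw [hddL, hdθ, hsin]
    show m * _ = m * Real.sqrt ((y₁ t)^2 + (y₂ t)^2) * _ - k * (Real.sqrt ((y₁ t)^2 + (y₂ t)^2) - ℓ₀)
      - m * g * _ + k * (Real.sqrt ((y₁ t)^2 + (y₂ t)^2)
        + (m * y₁ t * ddy₁ t + m * y₂ t * ddy₂ t + m * g * y₂ t)
          / (k * Real.sqrt ((y₁ t)^2 + (y₂ t)^2)) - ℓ₀)
    have h4 : Real.sqrt ((y₁ t)^2 + (y₂ t)^2) ^ 4 = ((y₁ t)^2 + (y₂ t)^2)^2 := by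
      rw [show (4:ℕ) = 2*2 from rfl, pow_mul, hL2 t]
    have h3 : Real.sqrt ((y₁ t)^2 + (y₂ t)^2) ^ 3
        = ((y₁ t)^2 + (y₂ t)^2) * Real.sqrt ((y₁ t)^2 + (y₂ t)^2) := by
      rw [pow_succ, pow_succ, pow_one, ← pow_two, hL2 t]
    field_simp
    ring_nf
    rw [hL2 t]
    ring
  · rw [hddθ, hdθ, hdL, hcos]
    show m * (Real.sqrt ((y₁ t)^2 + (y₂ t)^2))^2 * _ =
      -(m * g * Real.sqrt ((y₁ t)^2 + (y₂ t)^2) * _)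
      - 2 * m * Real.sqrt ((y₁ t)^2 + (y₂ t)^2) * _ * _
      + (m * g * y₁ t + m * y₁ t * ddy₂ t - m * y₂ t * ddy₁ t)
    rw [hL2]
    rw [show m * g * Real.sqrt ((y₁ t)^2 + (y₂ t)^2) * (y₁ t / Real.sqrt ((y₁ t)^2 + (y₂ t)^2))
        = m * g * y₁ t from by field_simp,
      show 2 * m * Real.sqrt ((y₁ t)^2 + (y₂ t)^2) *
          ((y₁ t * dy₁ t + y₂ t * dy₂ t) / Real.sqrt ((y₁ t)^2 + (y₂ t)^2))
        = 2 * m * (y₁ t * dy₁ t + y₂ t * dy₂ t) from by field_simp]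
    field_simp
    ring
end
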